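/- Let ι be an index type and, for each i ∈ ι, let I i ⊆ ℝ be a nonempty preconnected set (an interval), with the sets I i pairwise disjoint. Let D = ⋃ i, I i and assume that every point p ∈ I i has a neighborhood U with D ∩ U = I i ∩ U (the intervals are separated in D). Let f, F : ℝ → ℝ with F a primitive of f on D. Then a function φ : ℝ → ℝ is a primitive of f on D if and only if for each i ∈ ι there exists a constant c i ∈ ℝ such that φ(x) = F(x) + c i for all x ∈ I i. -/

import Mathlib

theorem stmt1 {ι : Type*} (I : ι → Set ℝ) (hne : ∀ i, (I i).Nonempty)
    (hconn : ∀ i, IsPreconnected (I i))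
    (hdisj : Pairwise fun i j => Disjoint (I i) (I j))
    (D : Set ℝ) (hD : D = ⋃ i, I i)
    (hsep : ∀ i, ∀ p ∈ I i, ∃ U ∈ nhds p, D ∩ U = I i ∩ U)
    (f F : ℝ → ℝ) (hF : ∀ x ∈ D, HasDerivWithinAt F (f x) D x) (φ : ℝ → ℝ) :
    (∀ x ∈ D, HasDerivWithinAt φ (f x) D x) ↔
      ∀ i, ∃ c : ℝ, ∀ x ∈ I i, φ x = F x + c := by
  have hsub : ∀ i, I i ⊆ D := fun i => hD ▸ Set.subset_iUnion I i
  have hcg : ∀ i, ∀ x ∈ I i, D =ᶠ[nhds x] I i := by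
    intro i x hx
    obtain ⟨U, hU, hDU⟩ := hsep i x hx
    filter_upwards [hU] with y hy
    simp only [eq_iff_iff]
    constructor
    · intro hyD; exact (hDU ▸ (Set.mem_inter hyD hy)).1
    · intro hyI; exact hsub i hyI
  constructor
  · intro hφ i
    obtain ⟨x₀, hx₀⟩ := hne i
    refine ⟨φ x₀ - F x₀, fun x hx => ?_⟩
    have hconv : Convex ℝ (I i) := (hconn i).ordConnected.convex
    have key : ∀ y ∈ I i, HasDerivWithinAt (fun z => φ z - F z) 0 (I i) y := by
      intro y hy
      have h1 := (hφ y (hsub i hy)).congr_set (hcg i y hy)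
      have h2 := (hF y (hsub i hy)).congr_set (hcg i y hy)
      have h3 := h1.sub h2
      rw [sub_self] at h3
      exact h3
    have := hconv.norm_image_sub_le_of_norm_hasDerivWithin_le key
      (C := 0) (fun y hy => by simp) hx₀ hx
    have h0 : φ x - F x = φ x₀ - F x₀ := by
      rw [← sub_eq_zero]
      simpa using this
    linarith
  · intro h x hxD
    rw [hD] at hxD
    obtain ⟨i, hx⟩ := Set.mem_iUnion.mp hxD
    obtain ⟨c, hc⟩ := h i
    have h2 : HasDerivWithinAt (fun y => F y + c) (f x) (I i) x :=
      ((hF x (hsub i hx)).congr_set (hcg i x hx)).add_const c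
    have h3 : HasDerivWithinAt φ (f x) (I i) x :=
      h2.congr (fun y hy => hc y hy) (hc x hx)
    exact h3.congr_set (hcg i x hx).symm
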